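/- (Forward bisimulation implies ordinary fluid lumpability.) If H = {H_1,…,H_m} is a forward CRN bisimulation of a CRN (S,R) with at most binary reactions, then for each block H ∈ H there exists a polynomial ℘_H in m variables such that Σ_{X∈H} F_X(V) = ℘_H(Σ_{X∈H_1} V_X, …, Σ_{X∈H_m} V_X) for all V ∈ ℝ^S_{≥0}. -/

import Mathlib

open scoped Classical BigOperators

/-- A chemical reaction `ρ →α π`. -/
structure Reaction (S : Type*) where
  reactant : Multiset S
  product  : Multiset S
  rate     : ℝ

variable {S : Type*}

/-- ρ-reaction rate `crr(X,ρ) = (ρ(X)+1) · Σ_{X+ρ →α π ∈ R} α`. -/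
noncomputable def crr [DecidableEq S] (Rs : Finset (Reaction S)) (X : S) (ρ : Multiset S) : ℝ :=
  ((ρ.count X : ℝ) + 1) * ∑ r ∈ Rs, if r.reactant = X ::ₘ ρ then r.rate else 0

/-- ρ-production rate `pr(X,ρ,Z) = (ρ(X)+1) · Σ_{X+ρ →α π ∈ R} α·π(Z)`. -/
noncomputable def pr [DecidableEq S] (Rs : Finset (Reaction S)) (X : S) (ρ : Multiset S) (Z : S) : ℝ :=
  ((ρ.count X : ℝ) + 1) * ∑ r ∈ Rs, if r.reactant = X ::ₘ ρ then r.rate * (r.product.count Z : ℝ) else 0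

/-- production rate towards a set of species: `pr(X,ρ,H) = Σ_{Z ∈ H} pr(X,ρ,Z)`. -/
noncomputable def prB [DecidableEq S] [Fintype S] (Rs : Finset (Reaction S)) (X : S) (ρ : Multiset S) (H : Set S) : ℝ :=
  ∑ Z : S, if Z ∈ H then pr Rs X ρ Z else 0

/-- ρ-flux rate `fr(X,ρ) = Σ_{ρ →α π ∈ R} (π(X)−ρ(X))·α`. -/
noncomputable def fr [DecidableEq S] (Rs : Finset (Reaction S)) (X : S) (ρ : Multiset S) : ℝ :=
  ∑ r ∈ Rs, if r.reactant = ρ then ((r.product.count X : ℝ) - (ρ.count X : ℝ)) * r.rate else 0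

/-- cumulative flux rate `fr(X,M) = Σ_{ρ ∈ M} fr(X,ρ)`. -/
noncomputable def frM [DecidableEq S] (Rs : Finset (Reaction S)) (X : S) (M : Finset (Multiset S)) : ℝ :=
  ∑ ρ ∈ M, fr Rs X ρ

/-- mass-action vector field `F_X(V) = Σ_{ρ→α π}(π(X)−ρ(X))·α·Π_Y V_Y^{ρ(Y)}`. -/
noncomputable def vf [DecidableEq S] [Fintype S] (Rs : Finset (Reaction S)) (V : S → ℝ) (X : S) : ℝ :=
  ∑ r ∈ Rs, ((r.product.count X : ℝ) - (r.reactant.count X : ℝ)) * r.rate * ∏ Y : S, V Y ^ r.reactant.count Y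

/-- `μ` is a choice function for the partition induced by the equivalence `e`:
it maps every species to a fixed representative of its block. -/
def IsChoice (e : S → S → Prop) (μ : S → S) : Prop :=
  (∀ X, e X (μ X)) ∧ ∀ X Y, e X Y → μ X = μ Y

/-- forward splitter condition for a pair `(X,Y)` w.r.t. the partition induced by `e`. -/
def FSplit [DecidableEq S] [Fintype S] (Rs : Finset (Reaction S)) (e : S → S → Prop) (X Y : S) : Prop :=
  ∀ ρ : Multiset S, crr Rs X ρ = crr Rs Y ρ ∧
    ∀ W : S, prB Rs X ρ {Z | e W Z} = prB Rs Y ρ {Z | e W Z}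

/-- `e` is a forward CRN bisimulation. -/
def IsFB [DecidableEq S] [Fintype S] (Rs : Finset (Reaction S)) (e : S → S → Prop) : Prop :=
  Equivalence e ∧ ∀ X Y, e X Y → FSplit Rs e X Y

/-- the `≈`-class (w.r.t. the choice function `μ`) of the reactant multiset `ρ0`
among reactant multisets occurring in `Rs`. -/
noncomputable def reactClass [DecidableEq S] (Rs : Finset (Reaction S)) (μ : S → S) (ρ0 : Multiset S) : Finset (Multiset S) :=
  (Rs.image Reaction.reactant).filter (fun σ => σ.map μ = ρ0.map μ)

/-- backward splitter condition for a pair `(X,Y)` w.r.t. the choice function `μ`. -/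
def BSplit [DecidableEq S] (Rs : Finset (Reaction S)) (μ : S → S) (X Y : S) : Prop :=
  ∀ ρ0 ∈ Rs.image Reaction.reactant,
    frM Rs X (reactClass Rs μ ρ0) = frM Rs Y (reactClass Rs μ ρ0)

/-- `e` (with choice function `μ`) is a backward CRN bisimulation. -/
def IsBB [DecidableEq S] (Rs : Finset (Reaction S)) (e : S → S → Prop) (μ : S → S) : Prop :=
  Equivalence e ∧ IsChoice e μ ∧ ∀ X Y, e X Y → BSplit Rs μ X Y

/-- `V` is constant on the partition induced by `e`. -/
def ConstOn (e : S → S → Prop) (V : S → ℝ) : Prop := ∀ X Y, e X Y → V X = V Y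

/-- the sum of `V` over the block of `W`. -/
noncomputable def blockSum [Fintype S] (e : S → S → Prop) (V : S → ℝ) (W : S) : ℝ :=
  ∑ Z : S, if e W Z then V Z else 0


section FBAux

lemma pair_eq_pair' [DecidableEq S] {a b c d : S} :
    (a ::ₘ b ::ₘ (0:Multiset S) = c ::ₘ d ::ₘ 0) ↔ (a = c ∧ b = d) ∨ (a = d ∧ b = c) := by
  constructor
  · intro h
    rcases Multiset.cons_eq_cons.1 h with ⟨h1, h2⟩ | ⟨h1, cs, h2, h3⟩
    · left; exact ⟨h1, by simpa using h2⟩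
    · have hcs : cs = 0 := by
        have := congrArg Multiset.card h2
        simpa using this.symm
      subst hcs
      right
      have hb : b = c := by simpa using h2
      have hd : d = a := by simpa using h3
      exact ⟨hd.symm, hb⟩
  · rintro (⟨rfl, rfl⟩ | ⟨rfl, rfl⟩)
    · rfl
    · exact Multiset.cons_swap _ _ _

variable [Fintype S] [DecidableEq S]

/-- block-count of a multiset: `Σ_{X ∈ H} τ(X)` where `H` is the block of `X0`. -/
noncomputable def cntB (e : Setoid S) (X0 : S) (τ : Multiset S) : ℝ :=
  ∑ X : S, if e.r X0 X then (τ.count X : ℝ) else 0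

lemma cntB_zero (e : Setoid S) (X0 : S) : cntB e X0 0 = 0 := by simp [cntB]

lemma cntB_cons (e : Setoid S) (X0 : S) (a : S) (τ : Multiset S) :
    cntB e X0 (a ::ₘ τ) = cntB e X0 τ + (if e.r X0 a then 1 else 0) := by
  unfold cntB
  have h : ∀ X : S, (if e.r X0 X then ((a ::ₘ τ).count X : ℝ) else 0)
      = (if e.r X0 X then (τ.count X : ℝ) else 0)
        + (if X = a then (if e.r X0 X then (1:ℝ) else 0) else 0) := by
    intro X
    by_cases hXa : X = a
    · subst hXa
      by_cases hX : e.r X0 X <;> simp [hX, Multiset.count_cons]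
    · by_cases hX : e.r X0 X <;> simp [hX, hXa, Multiset.count_cons]
  rw [Finset.sum_congr rfl (fun X _ => h X), Finset.sum_add_distrib]
  congr 1
  simp

lemma prod_pow_count (V : S → ℝ) (ρ : Multiset S) :
    (∏ Y : S, V Y ^ ρ.count Y) = (ρ.map V).prod := by
  induction ρ using Multiset.induction_on with
  | empty => simp
  | cons a s ih =>
    have h : ∀ Y : S, V Y ^ (a ::ₘ s).count Y
        = V Y ^ s.count Y * (if Y = a then V Y else 1) := by
      intro Y
      by_cases hYa : Y = a <;> simp [hYa, Multiset.count_cons, pow_succ]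
    rw [Finset.prod_congr rfl (fun Y _ => h Y), Finset.prod_mul_distrib, ih,
      Multiset.map_cons, Multiset.prod_cons]
    simp [mul_comm]

lemma crr_zero_eq (Rs : Finset (Reaction S)) (Y : S) :
    crr Rs Y 0 = ∑ r ∈ Rs, if r.reactant = Y ::ₘ 0 then r.rate else 0 := by
  simp [crr]

lemma prB_eq (e : Setoid S) (X0 : S) (Rs : Finset (Reaction S)) (X : S) (ρ : Multiset S) :
    prB Rs X ρ {Z | e.r X0 Z}
      = ((ρ.count X : ℝ) + 1)
        * ∑ r ∈ Rs, if r.reactant = X ::ₘ ρ then r.rate * cntB e X0 r.product else 0 := by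
  unfold prB pr cntB
  simp only [Set.mem_setOf_eq]
  calc (∑ W : S, if e.r X0 W then ((ρ.count X : ℝ) + 1)
          * ∑ r ∈ Rs, (if r.reactant = X ::ₘ ρ then r.rate * (r.product.count W : ℝ) else 0) else 0)
      = ∑ W : S, ∑ r ∈ Rs, (if e.r X0 W then ((ρ.count X : ℝ) + 1)
          * (if r.reactant = X ::ₘ ρ then r.rate * (r.product.count W : ℝ) else 0) else 0) := by
        apply Finset.sum_congr rfl; intro W _
        split <;> simp [Finset.mul_sum]
    _ = ∑ r ∈ Rs, ∑ W : S, (if e.r X0 W then ((ρ.count X : ℝ) + 1)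
          * (if r.reactant = X ::ₘ ρ then r.rate * (r.product.count W : ℝ) else 0) else 0) :=
        Finset.sum_comm
    _ = ((ρ.count X : ℝ) + 1)
        * ∑ r ∈ Rs, if r.reactant = X ::ₘ ρ then r.rate
            * ∑ W : S, (if e.r X0 W then (r.product.count W : ℝ) else 0) else 0 := by
        rw [Finset.mul_sum]
        apply Finset.sum_congr rfl; intro r _
        by_cases hc : r.reactant = X ::ₘ ρ
        · simp only [hc, if_true, Finset.mul_sum]
          apply Finset.sum_congr rfl; intro W _
          split <;> ring
        · simp [hc]

lemma prB_zero_eq (e : Setoid S) (X0 : S) (Rs : Finset (Reaction S)) (Y : S) :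
    prB Rs Y 0 {Z | e.r X0 Z}
      = ∑ r ∈ Rs, if r.reactant = Y ::ₘ 0 then r.rate * cntB e X0 r.product else 0 := by
  rw [prB_eq]; simp

lemma crr_pair_eq (Rs : Finset (Reaction S)) (Y Z : S) :
    crr Rs Z (Y ::ₘ 0) = (1 + if Y = Z then (1:ℝ) else 0)
      * ∑ r ∈ Rs, if r.reactant = Y ::ₘ Z ::ₘ 0 then r.rate else 0 := by
  unfold crr
  rw [Multiset.cons_swap]
  congr 1
  by_cases h : Y = Z
  · subst h; simp [Multiset.count_cons]
  · simp [Multiset.count_cons, h, Ne.symm h]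

lemma prB_pair_eq (e : Setoid S) (X0 : S) (Rs : Finset (Reaction S)) (Y Z : S) :
    prB Rs Z (Y ::ₘ 0) {W | e.r X0 W}
      = (1 + if Y = Z then (1:ℝ) else 0)
        * ∑ r ∈ Rs, if r.reactant = Y ::ₘ Z ::ₘ 0 then r.rate * cntB e X0 r.product else 0 := by
  rw [prB_eq, Multiset.cons_swap]
  congr 1
  by_cases h : Y = Z
  · subst h; simp [Multiset.count_cons]
  · simp [Multiset.count_cons, h, Ne.symm h]

lemma crr_pair_sym (Rs : Finset (Reaction S)) (Y Z : S) :
    crr Rs Z (Y ::ₘ 0) = crr Rs Y (Z ::ₘ 0) := by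
  rw [crr_pair_eq, crr_pair_eq, Multiset.cons_swap]
  congr 2
  by_cases h : Y = Z
  · simp [h]
  · simp [h, Ne.symm h]

lemma prB_pair_sym (e : Setoid S) (X0 : S) (Rs : Finset (Reaction S)) (Y Z : S) :
    prB Rs Z (Y ::ₘ 0) {W | e.r X0 W} = prB Rs Y (Z ::ₘ 0) {W | e.r X0 W} := by
  rw [prB_pair_eq, prB_pair_eq, Multiset.cons_swap]
  congr 2
  by_cases h : Y = Z
  · simp [h]
  · simp [h, Ne.symm h]

lemma vf_block_sum (Rs : Finset (Reaction S)) (e : Setoid S) (X0 : S) (V : S → ℝ) :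
    (∑ X : S, if e.r X0 X then vf Rs V X else 0)
      = ∑ r ∈ Rs, r.rate * (cntB e X0 r.product - cntB e X0 r.reactant)
          * (r.reactant.map V).prod := by
  unfold vf
  calc (∑ X : S, if e.r X0 X then
          ∑ r ∈ Rs, ((r.product.count X : ℝ) - (r.reactant.count X : ℝ)) * r.rate
            * ∏ Y : S, V Y ^ r.reactant.count Y else 0)
      = ∑ X : S, ∑ r ∈ Rs, (if e.r X0 X then
          ((r.product.count X : ℝ) - (r.reactant.count X : ℝ)) * r.rate
            * ∏ Y : S, V Y ^ r.reactant.count Y else 0) := by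
        apply Finset.sum_congr rfl; intro X _; split <;> simp
    _ = ∑ r ∈ Rs, ∑ X : S, (if e.r X0 X then
          ((r.product.count X : ℝ) - (r.reactant.count X : ℝ)) * r.rate
            * ∏ Y : S, V Y ^ r.reactant.count Y else 0) := Finset.sum_comm
    _ = ∑ r ∈ Rs, r.rate * (cntB e X0 r.product - cntB e X0 r.reactant)
          * (r.reactant.map V).prod := by
        apply Finset.sum_congr rfl; intro r _
        simp only [prod_pow_count]
        have h : ∀ X : S, (if e.r X0 X then
            ((r.product.count X : ℝ) - (r.reactant.count X : ℝ)) * r.rate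
              * (r.reactant.map V).prod else 0)
            = ((if e.r X0 X then (r.product.count X : ℝ) else 0)
                - (if e.r X0 X then (r.reactant.count X : ℝ) else 0))
              * (r.rate * (r.reactant.map V).prod) := by
          intro X; split <;> ring
        rw [Finset.sum_congr rfl (fun X _ => h X), ← Finset.sum_mul,
          Finset.sum_sub_distrib]
        unfold cntB; ring

lemma sum_card0 (Rs : Finset (Reaction S)) (e : Setoid S) (X0 : S) (V : S → ℝ) :
    (∑ r ∈ Rs, if Multiset.card r.reactant = 0 then
        r.rate * (cntB e X0 r.product - cntB e X0 r.reactant) * (r.reactant.map V).prod else 0)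
      = ∑ r ∈ Rs, if r.reactant = 0 then r.rate * cntB e X0 r.product else 0 := by
  apply Finset.sum_congr rfl; intro r _
  by_cases h : r.reactant = 0
  · simp [h, cntB_zero]
  · simp [h, Multiset.card_eq_zero]

lemma sum_card1 (Rs : Finset (Reaction S)) (e : Setoid S) (X0 : S) (V : S → ℝ) :
    (∑ r ∈ Rs, if Multiset.card r.reactant = 1 then
        r.rate * (cntB e X0 r.product - cntB e X0 r.reactant) * (r.reactant.map V).prod else 0)
      = ∑ Y : S, (prB Rs Y 0 {Z | e.r X0 Z} - (if e.r X0 Y then 1 else 0) * crr Rs Y 0) * V Y := by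
  have hR : ∀ Y : S,
      (prB Rs Y 0 {Z | e.r X0 Z} - (if e.r X0 Y then 1 else 0) * crr Rs Y 0) * V Y
        = ∑ r ∈ Rs, (if r.reactant = Y ::ₘ 0 then
            r.rate * (cntB e X0 r.product - (if e.r X0 Y then 1 else 0)) * V Y else 0) := by
    intro Y
    rw [prB_zero_eq, crr_zero_eq, Finset.mul_sum, ← Finset.sum_sub_distrib, Finset.sum_mul]
    apply Finset.sum_congr rfl; intro r _
    split <;> ring
  rw [Finset.sum_congr rfl (fun Y _ => hR Y), Finset.sum_comm]
  apply Finset.sum_congr rfl; intro r _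
  by_cases hc : Multiset.card r.reactant = 1
  · obtain ⟨a, ha⟩ := Multiset.card_eq_one.mp hc
    have ha' : r.reactant = a ::ₘ 0 := by simpa using ha
    rw [ha']
    have h : ∀ Y : S, (if (a ::ₘ (0:Multiset S)) = Y ::ₘ 0 then
        r.rate * (cntB e X0 r.product - (if e.r X0 Y then 1 else 0)) * V Y else 0)
        = (if Y = a then
            r.rate * (cntB e X0 r.product - (if e.r X0 Y then 1 else 0)) * V Y else 0) := by
      intro Y
      have : ((a ::ₘ (0:Multiset S)) = Y ::ₘ 0) = (Y = a) := by
        simp only [Multiset.cons_zero, Multiset.singleton_inj, eq_comm]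
      simp only [this]
    rw [Finset.sum_congr rfl (fun Y _ => h Y)]
    rw [Finset.sum_ite_eq' Finset.univ a]
    have hcnt : cntB e X0 (a ::ₘ (0:Multiset S)) = if e.r X0 a then 1 else 0 := by
      rw [cntB_cons, cntB_zero, zero_add]
    rw [if_pos (by simp : Multiset.card (a ::ₘ (0:Multiset S)) = 1)]
    simp only [Finset.mem_univ, if_true, Multiset.map_cons, Multiset.map_zero,
      Multiset.prod_cons, Multiset.prod_zero, hcnt, mul_one]
  · have h0 : ∀ Y : S, (if r.reactant = Y ::ₘ 0 then
        r.rate * (cntB e X0 r.product - (if e.r X0 Y then 1 else 0)) * V Y else 0) = 0 := by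
      intro Y
      rw [if_neg]
      intro h
      exact hc (by rw [h]; simp)
    rw [Finset.sum_congr rfl (fun Y _ => h0 Y)]
    simp [hc]

lemma sum_pair_ind (a b : S) (c : ℝ) :
    (∑ Y : S, ∑ Z : S, if Y = a ∧ Z = b then c else 0) = c := by
  have h : ∀ Y : S, (∑ Z : S, if Y = a ∧ Z = b then c else 0)
      = (if Y = a then c else 0) := by
    intro Y
    by_cases hY : Y = a
    · simp [hY]
    · simp [hY]
  rw [Finset.sum_congr rfl (fun Y _ => h Y)]
  simp

lemma sum_card2 (Rs : Finset (Reaction S)) (e : Setoid S) (X0 : S) (V : S → ℝ) :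
    (∑ r ∈ Rs, if Multiset.card r.reactant = 2 then
        r.rate * (cntB e X0 r.product - cntB e X0 r.reactant) * (r.reactant.map V).prod else 0)
      = ∑ Y : S, ∑ Z : S,
          ((1/2) * (prB Rs Z (Y ::ₘ 0) {W | e.r X0 W}
            - ((if e.r X0 Y then (1:ℝ) else 0) + (if e.r X0 Z then 1 else 0)) * crr Rs Z (Y ::ₘ 0)))
          * (V Y * V Z) := by
  have hR : ∀ Y Z : S,
      ((1/2) * (prB Rs Z (Y ::ₘ 0) {W | e.r X0 W}
            - ((if e.r X0 Y then (1:ℝ) else 0) + (if e.r X0 Z then 1 else 0)) * crr Rs Z (Y ::ₘ 0)))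
          * (V Y * V Z)
        = ∑ r ∈ Rs, (if r.reactant = Y ::ₘ Z ::ₘ 0 then
            (1/2) * (1 + if Y = Z then (1:ℝ) else 0) * r.rate
              * (cntB e X0 r.product
                  - ((if e.r X0 Y then (1:ℝ) else 0) + (if e.r X0 Z then 1 else 0)))
              * (V Y * V Z) else 0) := by
    intro Y Z
    rw [prB_pair_eq, crr_pair_eq]
    simp only [Finset.mul_sum]
    rw [← Finset.sum_sub_distrib]
    simp only [Finset.mul_sum]
    rw [Finset.sum_mul]
    apply Finset.sum_congr rfl; intro r _
    split_ifs <;> ring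
  rw [Finset.sum_congr rfl (fun Y (_ : Y ∈ Finset.univ) => Finset.sum_congr rfl
    (fun Z (_ : Z ∈ Finset.univ) => hR Y Z))]
  rw [Finset.sum_congr rfl (fun Y (_ : Y ∈ Finset.univ) => Finset.sum_comm), Finset.sum_comm]
  apply Finset.sum_congr rfl; intro r _
  by_cases hc : Multiset.card r.reactant = 2
  · obtain ⟨a, b, hab⟩ := Multiset.card_eq_two.mp hc
    have ha' : r.reactant = a ::ₘ b ::ₘ 0 := by rw [hab]; rfl
    rw [ha']
    have hcnt : cntB e X0 (a ::ₘ b ::ₘ (0:Multiset S))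
        = (if e.r X0 a then (1:ℝ) else 0) + (if e.r X0 b then 1 else 0) := by
      rw [cntB_cons, cntB_cons, cntB_zero]; ring
    have hprod : ((a ::ₘ b ::ₘ (0:Multiset S)).map V).prod = V a * V b := by simp
    by_cases hab2 : a = b
    · subst hab2
      have hpt : ∀ Y Z : S, (if (a ::ₘ a ::ₘ (0:Multiset S)) = Y ::ₘ Z ::ₘ 0 then
            (1/2) * (1 + if Y = Z then (1:ℝ) else 0) * r.rate
              * (cntB e X0 r.product
                  - ((if e.r X0 Y then (1:ℝ) else 0) + (if e.r X0 Z then 1 else 0)))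
              * (V Y * V Z) else 0)
          = if Y = a ∧ Z = a then
              r.rate * (cntB e X0 r.product - cntB e X0 (a ::ₘ a ::ₘ (0:Multiset S)))
                * ((a ::ₘ a ::ₘ (0:Multiset S)).map V).prod else 0 := by
        intro Y Z
        by_cases h : Y = a ∧ Z = a
        · rw [h.1, h.2, hcnt, hprod]
          simp only [eq_self_iff_true, and_self, if_true]
          ring
        · rw [if_neg h, if_neg]
          intro hcond
          rcases pair_eq_pair'.mp hcond with ⟨h1, h2⟩ | ⟨h1, h2⟩
          · exact h ⟨h1.symm, h2.symm⟩
          · exact h ⟨h2.symm, h1.symm⟩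
      rw [Finset.sum_congr rfl (fun Y (_ : Y ∈ Finset.univ) => Finset.sum_congr rfl
        (fun Z (_ : Z ∈ Finset.univ) => hpt Y Z))]
      rw [sum_pair_ind]
      rw [if_pos (by simp : Multiset.card (a ::ₘ a ::ₘ (0:Multiset S)) = 2)]
    · have hpt : ∀ Y Z : S, (if (a ::ₘ b ::ₘ (0:Multiset S)) = Y ::ₘ Z ::ₘ 0 then
            (1/2) * (1 + if Y = Z then (1:ℝ) else 0) * r.rate
              * (cntB e X0 r.product
                  - ((if e.r X0 Y then (1:ℝ) else 0) + (if e.r X0 Z then 1 else 0)))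
              * (V Y * V Z) else 0)
          = (if Y = a ∧ Z = b then
              (1/2) * (r.rate * (cntB e X0 r.product - cntB e X0 (a ::ₘ b ::ₘ (0:Multiset S)))
                * ((a ::ₘ b ::ₘ (0:Multiset S)).map V).prod) else 0)
            + (if Y = b ∧ Z = a then
              (1/2) * (r.rate * (cntB e X0 r.product - cntB e X0 (a ::ₘ b ::ₘ (0:Multiset S)))
                * ((a ::ₘ b ::ₘ (0:Multiset S)).map V).prod) else 0) := by
        intro Y Z
        by_cases h1 : Y = a ∧ Z = b
        · rw [h1.1, h1.2, hcnt, hprod]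
          have hne : ¬(a = b ∧ b = a) := fun hh => hab2 hh.1
          simp only [eq_self_iff_true, and_self, if_true, if_neg hne, if_neg hab2]
          ring
        · by_cases h2 : Y = b ∧ Z = a
          · rw [h2.1, h2.2, hcnt, hprod, if_pos (Multiset.cons_swap a b 0)]
            have hne : ¬(b = a ∧ a = b) := fun hh => hab2 hh.2
            have hba : b ≠ a := fun hh => hab2 hh.symm
            simp only [eq_self_iff_true, and_self, if_true, if_neg hne, if_neg hba]
            ring
          · have hne : ¬((a ::ₘ b ::ₘ (0:Multiset S)) = Y ::ₘ Z ::ₘ 0) := by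
              intro hcond
              rcases pair_eq_pair'.mp hcond with ⟨e1, e2⟩ | ⟨e1, e2⟩
              · exact h1 ⟨e1.symm, e2.symm⟩
              · exact h2 ⟨e2.symm, e1.symm⟩
            rw [if_neg hne, if_neg h1, if_neg h2]
            simp
      rw [Finset.sum_congr rfl (fun Y (_ : Y ∈ Finset.univ) => Finset.sum_congr rfl
        (fun Z (_ : Z ∈ Finset.univ) => hpt Y Z))]
      simp only [Finset.sum_add_distrib]
      rw [sum_pair_ind, sum_pair_ind]
      rw [if_pos (by simp : Multiset.card (a ::ₘ b ::ₘ (0:Multiset S)) = 2)]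
      ring
  · have h0 : ∀ Y Z : S, (if r.reactant = Y ::ₘ Z ::ₘ 0 then
        (1/2) * (1 + if Y = Z then (1:ℝ) else 0) * r.rate
          * (cntB e X0 r.product
              - ((if e.r X0 Y then (1:ℝ) else 0) + (if e.r X0 Z then 1 else 0)))
          * (V Y * V Z) else 0) = 0 := by
      intro Y Z
      rw [if_neg]
      intro h
      exact hc (by rw [h]; simp)
    rw [Finset.sum_congr rfl (fun Y (_ : Y ∈ Finset.univ) => Finset.sum_congr rfl
      (fun Z (_ : Z ∈ Finset.univ) => h0 Y Z))]
    simp [hc]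

lemma decomp (Rs : Finset (Reaction S)) (helem : ∀ r ∈ Rs, Multiset.card r.reactant ≤ 2)
    (e : Setoid S) (X0 : S) (V : S → ℝ) :
    (∑ X : S, if e.r X0 X then vf Rs V X else 0)
      = (∑ r ∈ Rs, if r.reactant = 0 then r.rate * cntB e X0 r.product else 0)
        + (∑ Y : S, (prB Rs Y 0 {Z | e.r X0 Z} - (if e.r X0 Y then 1 else 0) * crr Rs Y 0) * V Y)
        + ∑ Y : S, ∑ Z : S,
            ((1/2) * (prB Rs Z (Y ::ₘ 0) {W | e.r X0 W}
              - ((if e.r X0 Y then (1:ℝ) else 0) + (if e.r X0 Z then 1 else 0))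
                * crr Rs Z (Y ::ₘ 0))) * (V Y * V Z) := by
  rw [vf_block_sum, ← sum_card0 Rs e X0 V, ← sum_card1 Rs e X0 V, ← sum_card2 Rs e X0 V,
    ← Finset.sum_add_distrib, ← Finset.sum_add_distrib]
  apply Finset.sum_congr rfl; intro r hr
  have h2 := helem r hr
  have h3 : Multiset.card r.reactant = 0 ∨ Multiset.card r.reactant = 1
      ∨ Multiset.card r.reactant = 2 := by omega
  rcases h3 with h | h | h <;> simp [h]

lemma sum_lift1 (e : Setoid S) (g V : S → ℝ)
    (hg : ∀ Y Y' : S, e.r Y Y' → g Y = g Y') :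
    ∑ Y : S, g Y * V Y
      = ∑ q : Quotient e, g q.out * ∑ Z : S, if Quotient.mk e Z = q then V Z else 0 := by
  symm
  have h1 : ∀ q : Quotient e, g q.out * (∑ Z : S, if Quotient.mk e Z = q then V Z else 0)
      = ∑ Z : S, (if Quotient.mk e Z = q then g q.out * V Z else 0) := by
    intro q; rw [Finset.mul_sum]; apply Finset.sum_congr rfl; intro Z _; split <;> simp
  calc ∑ q : Quotient e, g q.out * ∑ Z : S, (if Quotient.mk e Z = q then V Z else 0)
      = ∑ q : Quotient e, ∑ Z : S, (if Quotient.mk e Z = q then g q.out * V Z else 0) :=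
        Finset.sum_congr rfl (fun q _ => h1 q)
    _ = ∑ Z : S, ∑ q : Quotient e, (if Quotient.mk e Z = q then g q.out * V Z else 0) :=
        Finset.sum_comm
    _ = ∑ Y : S, g Y * V Y := by
        apply Finset.sum_congr rfl; intro Z _
        rw [Finset.sum_ite_eq]
        simp only [Finset.mem_univ, if_true]
        have hZ : e.r (Quotient.mk e Z).out Z := Quotient.exact (Quotient.out_eq _)
        rw [hg _ _ hZ]

lemma sum_lift2 (e : Setoid S) (g : S → S → ℝ) (V : S → ℝ)
    (hgl : ∀ Y Y' Z : S, e.r Y Y' → g Y Z = g Y' Z)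
    (hgr : ∀ Y Z Z' : S, e.r Z Z' → g Y Z = g Y Z') :
    ∑ Y : S, ∑ Z : S, g Y Z * (V Y * V Z)
      = ∑ q : Quotient e, ∑ q' : Quotient e, g q.out q'.out
          * ((∑ Z : S, if Quotient.mk e Z = q then V Z else 0)
             * (∑ Z : S, if Quotient.mk e Z = q' then V Z else 0)) := by
  calc ∑ Y : S, ∑ Z : S, g Y Z * (V Y * V Z)
      = ∑ Y : S, ∑ Z : S, (g Y Z * V Y) * V Z := by
        apply Finset.sum_congr rfl; intro Y _
        apply Finset.sum_congr rfl; intro Z _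
        ring
    _ = ∑ Y : S, ∑ q' : Quotient e, (g Y q'.out * V Y)
          * (∑ Z : S, if Quotient.mk e Z = q' then V Z else 0) := by
        apply Finset.sum_congr rfl; intro Y _
        exact sum_lift1 e (fun Z => g Y Z * V Y) V
          (fun Z Z' h => by rw [hgr Y Z Z' h])
    _ = ∑ q' : Quotient e, ∑ Y : S,
          (g Y q'.out * (∑ Z : S, if Quotient.mk e Z = q' then V Z else 0)) * V Y := by
        rw [Finset.sum_comm]
        apply Finset.sum_congr rfl; intro q' _
        apply Finset.sum_congr rfl; intro Y _
        ring
    _ = ∑ q' : Quotient e, ∑ q : Quotient e,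
          (g q.out q'.out * (∑ Z : S, if Quotient.mk e Z = q' then V Z else 0))
            * (∑ Z : S, if Quotient.mk e Z = q then V Z else 0) := by
        apply Finset.sum_congr rfl; intro q' _
        exact sum_lift1 e
          (fun Y => g Y q'.out * (∑ Z : S, if Quotient.mk e Z = q' then V Z else 0)) V
          (fun Y Y' h => by rw [hgl Y Y' q'.out h])
    _ = ∑ q : Quotient e, ∑ q' : Quotient e, g q.out q'.out
          * ((∑ Z : S, if Quotient.mk e Z = q then V Z else 0)
             * (∑ Z : S, if Quotient.mk e Z = q' then V Z else 0)) := by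
        rw [Finset.sum_comm]
        apply Finset.sum_congr rfl; intro q _
        apply Finset.sum_congr rfl; intro q' _
        ring

end FBAux

/-- Forward bisimulation implies ordinary fluid lumpability: for each block there is a
polynomial in the block variables whose evaluation at the block sums gives the sum of
the vector field over the block, on the nonnegative orthant. -/
theorem stmt9 {S : Type*} [Fintype S] [DecidableEq S]
    (Rs : Finset (Reaction S)) (hpos : ∀ r ∈ Rs, 0 < r.rate)
    (helem : ∀ r ∈ Rs, Multiset.card r.reactant ≤ 2)
    (e : Setoid S) (hfb : IsFB Rs e.r) (X0 : S) :
    ∃ p : MvPolynomial (Quotient e) ℝ,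
      ∀ V : S → ℝ, (∀ X, 0 ≤ V X) →
        (∑ X : S, if e.r X0 X then vf Rs V X else 0) =
          MvPolynomial.eval (fun q => ∑ Z : S, if Quotient.mk e Z = q then V Z else 0) p := by
  classical
  obtain ⟨heq, hsplit⟩ := hfb
  have hmem : ∀ Y Y' : S, e.r Y Y' → (e.r X0 Y ↔ e.r X0 Y') := fun Y Y' h =>
    ⟨fun h0 => heq.trans h0 h, fun h0 => heq.trans h0 (heq.symm h)⟩
  set A0 : ℝ := ∑ r ∈ Rs, if r.reactant = 0 then r.rate * cntB e X0 r.product else 0 with hA0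
  set g1 : S → ℝ := fun Y =>
    prB Rs Y 0 {Z | e.r X0 Z} - (if e.r X0 Y then 1 else 0) * crr Rs Y 0 with hg1def
  set g2 : S → S → ℝ := fun Y Z =>
    (1/2) * (prB Rs Z (Y ::ₘ 0) {W | e.r X0 W}
      - ((if e.r X0 Y then (1:ℝ) else 0) + (if e.r X0 Z then 1 else 0))
        * crr Rs Z (Y ::ₘ 0)) with hg2def
  have hite : ∀ Y Y' : S, e.r Y Y' →
      (if e.r X0 Y then (1:ℝ) else 0) = (if e.r X0 Y' then 1 else 0) := by
    intro Y Y' h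
    by_cases h0 : e.r X0 Y
    · rw [if_pos h0, if_pos ((hmem Y Y' h).mp h0)]
    · rw [if_neg h0, if_neg (fun hh => h0 ((hmem Y Y' h).mpr hh))]
  have hg1 : ∀ Y Y' : S, e.r Y Y' → g1 Y = g1 Y' := by
    intro Y Y' h
    simp only [hg1def]
    rw [((hsplit Y Y' h) 0).2 X0, ((hsplit Y Y' h) 0).1, hite Y Y' h]
  have hg2r : ∀ Y Z Z' : S, e.r Z Z' → g2 Y Z = g2 Y Z' := by
    intro Y Z Z' h
    simp only [hg2def]
    rw [((hsplit Z Z' h) (Y ::ₘ 0)).2 X0, ((hsplit Z Z' h) (Y ::ₘ 0)).1, hite Z Z' h]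
  have hg2l : ∀ Y Y' Z : S, e.r Y Y' → g2 Y Z = g2 Y' Z := by
    intro Y Y' Z h
    simp only [hg2def]
    rw [prB_pair_sym e X0 Rs Y Z, crr_pair_sym Rs Y Z,
      prB_pair_sym e X0 Rs Y' Z, crr_pair_sym Rs Y' Z,
      ((hsplit Y Y' h) (Z ::ₘ 0)).2 X0, ((hsplit Y Y' h) (Z ::ₘ 0)).1, hite Y Y' h]
  refine ⟨MvPolynomial.C A0
      + (∑ q : Quotient e, MvPolynomial.C (g1 q.out) * MvPolynomial.X q)
      + ∑ q : Quotient e, ∑ q' : Quotient e,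
          MvPolynomial.C (g2 q.out q'.out) * (MvPolynomial.X q * MvPolynomial.X q'), ?_⟩
  intro V hV
  rw [decomp Rs helem e X0 V]
  simp only [map_add, map_mul, map_sum, MvPolynomial.eval_C, MvPolynomial.eval_X]
  rw [sum_lift1 e g1 V hg1, sum_lift2 e g2 V hg2l hg2r]
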